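/- Let G be a graph on n vertices with a basic automorphism φ having N orbits of size 1 and all other orbits of size k > 1, and let M be a symmetric automorphism compatible matrix on G. If k is odd, M has at most N + (n−N)/k simple eigenvalues; if k is even, M has at most N + 2(n−N)/k simple eigenvalues. -/

import Mathlib

open Matrix Polynomial Finset

section Aux

lemma charpoly_conj_aux {m : Type*} [Fintype m] [DecidableEq m] {R : Type*} [CommRing R]
    (U A V : Matrix m m R) (hUV : U * V = 1) :
    (U * A * V).charpoly = A.charpoly := by
  have hm : charmatrix (U * A * V) =
      U.map C * charmatrix A * V.map C := by
    simp only [charmatrix, RingHom.mapMatrix_apply]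
    have hmul : ((U * A * V).map (C : R →+* R[X]) : Matrix m m R[X])
        = U.map C * A.map C * V.map C := by
      simp [Matrix.map_mul]
    rw [hmul, mul_sub, sub_mul]
    congr 1
    have h1 : (U.map (C : R →+* R[X])) * scalar m X = scalar m X * U.map C :=
      ((scalar_commute (X : R[X]) (fun r' => Commute.all _ _) (U.map C))).symm
    symm
    rw [h1, mul_assoc, ← Matrix.map_mul, hUV, Matrix.map_one _ (map_zero C) (map_one C), mul_one]
  have hone : (U.map (C : R →+* R[X])).det * (V.map C).det = 1 := by
    rw [← det_mul, ← Matrix.map_mul, hUV, Matrix.map_one _ (map_zero C) (map_one C), det_one]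
  have hdet : (U * A * V).charpoly = (U.map (C : R →+* R[X])).det * A.charpoly * (V.map C).det := by
    rw [Matrix.charpoly, hm, det_mul, det_mul, Matrix.charpoly]
  rw [hdet, mul_right_comm, hone, one_mul]

lemma charpoly_diag {m : Type*} [Fintype m] [DecidableEq m] {R : Type*} [CommRing R]
    (d : m → R) : (diagonal d).charpoly = ∏ i, (X - C (d i)) := by
  have : charmatrix (diagonal d) = diagonal (fun i => (X : R[X]) - C (d i)) := by
    simp only [charmatrix, RingHom.mapMatrix_apply, scalar_apply,
      diagonal_map (map_zero C), diagonal_sub]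
  rw [Matrix.charpoly, this, det_diagonal]

lemma roots_eq_eigenvalues {n : ℕ} (M : Matrix (Fin n) (Fin n) ℝ) (hA : M.IsHermitian) :
    M.charpoly.roots = Finset.univ.val.map hA.eigenvalues := by
  have hsp := hA.spectral_theorem
  have hU : (hA.eigenvectorUnitary : Matrix (Fin n) (Fin n) ℝ) *
      (star hA.eigenvectorUnitary : Matrix (Fin n) (Fin n) ℝ) = 1 := by
    simpa using (Matrix.mem_unitaryGroup_iff'.mp hA.eigenvectorUnitary.2)
  have h1 : M.charpoly =
      (diagonal (RCLike.ofReal ∘ hA.eigenvalues) : Matrix (Fin n) (Fin n) ℝ).charpoly := by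
    have h := congrArg Matrix.charpoly hsp
    rwa [Unitary.conjStarAlgAut_apply, charpoly_conj_aux _ _ _ hU] at h
  rw [h1]
  have h2 : (RCLike.ofReal ∘ hA.eigenvalues : Fin n → ℝ) = hA.eigenvalues := by
    funext i; simp
  rw [h2, charpoly_diag]
  have h3 : (∏ i, (X - C (hA.eigenvalues i))) =
      ((Finset.univ.val.map hA.eigenvalues).map fun a => X - C a).prod := by
    rw [Multiset.map_map]; rfl
  rw [h3, roots_multiset_prod_X_sub_C]

lemma real_pm_one_of_pow_eq_one {c : ℝ} {k : ℕ} (hk : k ≠ 0) (h : c ^ k = 1) :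
    c = 1 ∨ c = -1 := by
  have habs : |c| ^ k = 1 := by
    rw [← abs_pow, h, abs_one]
  have h1 : |c| = 1 := by
    rcases lt_trichotomy |c| 1 with hlt | heq | hgt
    · have := pow_lt_one₀ (abs_nonneg c) hlt hk
      rw [habs] at this; exact absurd this (lt_irrefl 1)
    · exact heq
    · have := one_lt_pow₀ hgt hk
      rw [habs] at this; exact absurd this (lt_irrefl 1)
  exact (abs_eq (by norm_num)).mp h1

end Aux

open RealInnerProductSpace

/-- Bound on the number of simple eigenvalues of a real symmetric automorphism
compatible matrix on a graph with a basic automorphism `φ` having `N` fixed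
vertices and `r = (n-N)/k` orbits of size `k > 1`: at most `N + (n-N)/k` simple
eigenvalues if `k` is odd, and at most `N + 2(n-N)/k` if `k` is even. -/
theorem basic_simple_eigenvalue_bound
    {n k N r : ℕ} (hk : 1 < k)
    (φ : Equiv.Perm (Fin n))
    (M : Matrix (Fin n) (Fin n) ℝ)
    (hM : ∀ i j, M (φ i) (φ j) = M i j)
    (hsym : Mᵀ = M)
    (τf : Fin N → Fin n) (hτf : ∀ a, φ (τf a) = τf a)
    (τ : Fin r → Fin n) (hper : ∀ i, (⇑φ)^[k] (τ i) = τ i)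
    (hbij : Function.Bijective
      (Sum.elim τf (fun q : Fin k × Fin r => (⇑φ)^[q.1.val] (τ q.2)) :
        Fin N ⊕ Fin k × Fin r → Fin n)) :
    (Odd k →
      (M.charpoly.roots.toFinset.filter
        (fun μ => M.charpoly.roots.count μ = 1)).card ≤ N + (n - N) / k) ∧
    (Even k →
      (M.charpoly.roots.toFinset.filter
        (fun μ => M.charpoly.roots.count μ = 1)).card ≤ N + 2 * ((n - N) / k)) := by
  classical
  -- cardinalities
  have hcard : N + k * r = n := by
    have := Fintype.card_of_bijective hbij
    simpa using this
  have hdiv : (n - N) / k = r := by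
    have h : n - N = k * r := by omega
    rw [h, Nat.mul_div_cancel_left r (by omega)]
  -- hermitian
  have hA : M.IsHermitian := by
    rwa [Matrix.IsHermitian, Matrix.conjTranspose_eq_transpose_of_trivial]
  set ev := hA.eigenvalues with hev
  set b := hA.eigenvectorBasis with hb
  set T : EuclideanSpace ℝ (Fin n) →ₗ[ℝ] EuclideanSpace ℝ (Fin n) :=
    Matrix.toEuclideanLin M with hT
  set e : EuclideanSpace ℝ (Fin n) ≃ₗ[ℝ] (Fin n → ℝ) :=
    WithLp.linearEquiv 2 ℝ (Fin n → ℝ) with he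
  -- basic translations
  have heT : ∀ v : EuclideanSpace ℝ (Fin n), e (T v) = M *ᵥ (e v) := by
    intro v
    simp [hT, he, Matrix.toEuclideanLin_apply, WithLp.linearEquiv_apply]
  have hTb : ∀ j, T (b j) = ev j • b j := by
    intro j
    apply e.injective
    rw [heT, _root_.map_smul]
    have := hA.mulVec_eigenvectorBasis j
    simpa [he, WithLp.linearEquiv_apply] using this
  have hS : (Matrix.toEuclideanLin M).IsSymmetric := (Matrix.isHermitian_iff_isSymmetric).mp hA
  -- roots and counts
  have hroots : M.charpoly.roots = Finset.univ.val.map ev := roots_eq_eigenvalues M hA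
  have hcount : ∀ μ : ℝ,
      M.charpoly.roots.count μ = (Finset.univ.filter fun i => μ = ev i).card := by
    intro μ
    rw [hroots, Multiset.count_map]
    rfl
  -- phi^k = id
  have hφk : ∀ x : Fin n, (⇑φ)^[k] x = x := by
    intro x
    obtain ⟨s, rfl⟩ := hbij.2 x
    cases s with
    | inl a => exact Function.iterate_fixed (hτf a) k
    | inr q =>
      simp only [Sum.elim_inr]
      rw [← Function.iterate_add_apply, add_comm, Function.iterate_add_apply, hper]
  -- sigma
  set σL : EuclideanSpace ℝ (Fin n) →ₗ[ℝ] EuclideanSpace ℝ (Fin n) :=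
    e.symm.toLinearMap.comp ((LinearMap.funLeft ℝ ℝ ⇑φ).comp e.toLinearMap) with hσdef
  have heσ : ∀ (v : EuclideanSpace ℝ (Fin n)) (x : Fin n), e (σL v) x = e v (φ x) := by
    intro v x
    simp [hσdef, LinearMap.funLeft_apply]
  have hMφ : ∀ (v : Fin n → ℝ), M *ᵥ (fun x => v (φ x)) = fun x => (M *ᵥ v) (φ x) := by
    intro v
    funext x
    simp only [Matrix.mulVec, dotProduct]
    exact Fintype.sum_equiv φ _ _ (fun j => by rw [hM])
  have hcomm : ∀ v : EuclideanSpace ℝ (Fin n), T (σL v) = σL (T v) := by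
    intro v
    apply e.injective
    rw [heT]
    have h1 : e (σL v) = fun x => e v (φ x) := funext fun x => heσ v x
    have h2 : e (σL (T v)) = fun x => e (T v) (φ x) := funext fun x => heσ (T v) x
    rw [h1, h2, hMφ]
    funext x
    rw [heT]
  -- orthogonality key
  have keyOrth : ∀ (v : EuclideanSpace ℝ (Fin n)) (μ : ℝ), T v = μ • v →
      ∀ j, ev j ≠ μ → ⟪b j, v⟫ = 0 := by
    intro v μ hv j hj
    have h := hS (b j) v
    rw [show Matrix.toEuclideanLin M = T from rfl] at h
    rw [hTb j, hv, real_inner_smul_left, real_inner_smul_right] at h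
    have h0 : (ev j - μ) * ⟪b j, v⟫ = 0 := by ring_nf; linarith [h]
    rcases mul_eq_zero.mp h0 with h' | h'
    · exact absurd (by linarith) hj
    · exact h'
  -- main per-simple-eigenvalue claim
  set S := (M.charpoly.roots.toFinset.filter
      (fun μ => M.charpoly.roots.count μ = 1)) with hs
  have main : ∀ μ ∈ S, ∃ j : Fin n, ev j = μ ∧
      (σL (b j) = b j ∨ σL (b j) = -(b j)) ∧ (Odd k → σL (b j) = b j) := by
    intro μ hμ
    have hμc : M.charpoly.roots.count μ = 1 := (Finset.mem_filter.mp hμ).2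
    rw [hcount] at hμc
    obtain ⟨j₀, hj₀⟩ := Finset.card_eq_one.mp hμc
    have hj₀mem : j₀ ∈ Finset.univ.filter fun i => μ = ev i := by
      rw [hj₀]; exact Finset.mem_singleton_self _
    have hevj₀ : ev j₀ = μ := ((Finset.mem_filter.mp hj₀mem).2).symm
    have huniq : ∀ i : Fin n, ev i = μ → i = j₀ := by
      intro i hi
      have : i ∈ Finset.univ.filter fun i => μ = ev i :=
        Finset.mem_filter.mpr ⟨Finset.mem_univ _, hi.symm⟩
      rw [hj₀] at this
      exact Finset.mem_singleton.mp this
    -- spanning property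
    have hspan : ∀ w : EuclideanSpace ℝ (Fin n), T w = μ • w → w = ⟪b j₀, w⟫ • b j₀ := by
      intro w hw
      have hz : ∀ j ∈ Finset.univ, j ≠ j₀ → (⟪b j, w⟫ • b j : EuclideanSpace ℝ (Fin n)) = 0 := by
        intro j _ hj
        rw [keyOrth w μ hw j (fun h => hj (huniq j h)), zero_smul]
      calc w = ∑ j, ⟪b j, w⟫ • b j := (b.sum_repr' w).symm
        _ = ⟪b j₀, w⟫ • b j₀ :=
            Finset.sum_eq_single j₀ hz (fun h => absurd (Finset.mem_univ _) h)
    -- sigma of eigenvector is eigenvector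
    have hveig : T (b j₀) = μ • b j₀ := by rw [hTb, hevj₀]
    have hσeig : T (σL (b j₀)) = μ • σL (b j₀) := by
      rw [hcomm, hveig, _root_.map_smul]
    set c := ⟪b j₀, σL (b j₀)⟫ with hc
    have hσv : σL (b j₀) = c • b j₀ := by
      have := hspan _ hσeig
      rw [this]
    -- pointwise iteration
    set u : Fin n → ℝ := e (b j₀) with hu
    have hux : ∀ x, u (φ x) = c * u x := by
      intro x
      have h1 := heσ (b j₀) x
      rw [hσv] at h1
      have : e (c • b j₀) x = c * u x := by
        rw [_root_.map_smul]
        simp [hu]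
      rw [this] at h1
      exact h1.symm
    have hiter : ∀ (a : ℕ) (x : Fin n), u ((⇑φ)^[a] x) = c ^ a * u x := by
      intro a
      induction a with
      | zero => intro x; simp
      | succ m ih =>
        intro x
        rw [Function.iterate_succ_apply', hux, ih, pow_succ]
        ring
    have hune : u ≠ 0 := by
      intro h
      exact b.orthonormal.ne_zero j₀ (e.map_eq_zero_iff.mp h)
    obtain ⟨x₀, hx₀⟩ := Function.ne_iff.mp hune
    have hx₀' : u x₀ ≠ 0 := by simpa using hx₀
    have hck : c ^ k = 1 := by
      have h1 := hiter k x₀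
      rw [hφk] at h1
      have h2 : c ^ k * u x₀ = 1 * u x₀ := by rw [one_mul, ← h1]
      exact mul_right_cancel₀ hx₀' h2
    have hpm := real_pm_one_of_pow_eq_one (by omega) hck
    refine ⟨j₀, hevj₀, ?_, ?_⟩
    · rcases hpm with h | h
      · left; rw [hσv, h, one_smul]
      · right; rw [hσv, h, neg_one_smul]
    · intro hodd
      rcases hpm with h | h
      · rw [hσv, h, one_smul]
      · exfalso
        rw [h, hodd.neg_one_pow] at hck
        norm_num at hck
  -- the splitting
  set Sp := S.filter (fun μ => ∃ j : Fin n, ev j = μ ∧ σL (b j) = b j) with hSp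
  set Sm := S.filter (fun μ => ¬ ∃ j : Fin n, ev j = μ ∧ σL (b j) = b j) with hSm
  have hsplit : Sp.card + Sm.card = S.card := Finset.card_filter_add_card_filter_not _
  -- dimension computation helpers
  have hit_fix : ∀ (v : EuclideanSpace ℝ (Fin n)), σL v = v →
      ∀ (a : ℕ) (y : Fin n), e v ((⇑φ)^[a] y) = e v y := by
    intro v hσ a
    induction a with
    | zero => intro y; simp
    | succ m ih =>
      intro y
      rw [Function.iterate_succ_apply']
      have := heσ v ((⇑φ)^[m] y)
      rw [hσ] at this
      rw [← this, ih]
  have hit_neg : ∀ (v : EuclideanSpace ℝ (Fin n)), σL v = -v →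
      ∀ (a : ℕ) (y : Fin n), e v ((⇑φ)^[a] y) = (-1 : ℝ) ^ a * e v y := by
    intro v hσ
    have hstep : ∀ y, e v (φ y) = -(e v y) := by
      intro y
      have h1 := heσ v y
      rw [hσ, map_neg] at h1
      have : (-(e v)) y = -(e v y) := rfl
      rw [this] at h1
      exact h1.symm
    intro a
    induction a with
    | zero => intro y; simp
    | succ m ih =>
      intro y
      rw [Function.iterate_succ_apply', hstep, ih, pow_succ]
      ring
  -- bound for Sp
  have hSpcard : Sp.card ≤ N + r := by
    set Φ : EuclideanSpace ℝ (Fin n) →ₗ[ℝ] (Fin N ⊕ Fin r → ℝ) :=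
      (LinearMap.funLeft ℝ ℝ (Sum.elim τf τ)).comp e.toLinearMap with hΦ
    have hex : ∀ μ : ↥Sp, ∃ j : Fin n, ev j = (μ : ℝ) ∧ σL (b j) = b j :=
      fun μ => (Finset.mem_filter.mp μ.2).2
    choose J hJ1 hJ2 using hex
    set fam : ↥Sp → EuclideanSpace ℝ (Fin n) := fun μ => b (J μ) with hfam
    have heig : ∀ μ : ↥Sp, Module.End.HasEigenvector T (μ : ℝ) (fam μ) := by
      intro μ
      refine ⟨?_, ?_⟩
      · rw [Module.End.mem_eigenspace_iff]
        show T (b (J μ)) = (μ : ℝ) • b (J μ)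
        rw [hTb, hJ1 μ]
      · exact b.orthonormal.ne_zero _
    have hli : LinearIndependent ℝ fam :=
      Module.End.eigenvectors_linearIndependent' T (fun μ : ↥Sp => (μ : ℝ))
        Subtype.coe_injective _ heig
    have hrange : ∀ w ∈ Set.range fam, σL w = w := by
      rintro w ⟨μ, rfl⟩
      exact hJ2 μ
    have hdisj : Disjoint (Submodule.span ℝ (Set.range fam)) (LinearMap.ker Φ) := by
      have hVle : Set.range fam ⊆ (LinearMap.ker (σL - LinearMap.id) : Set _) := by
        intro w hw
        simp only [SetLike.mem_coe, LinearMap.mem_ker, LinearMap.sub_apply, LinearMap.id_apply,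
          sub_eq_zero]
        exact hrange w hw
      apply Disjoint.mono_left (Submodule.span_le.mpr hVle)
      rw [Submodule.disjoint_def]
      intro v hv1 hv2
      have hσ : σL v = v := by
        have := LinearMap.mem_ker.mp hv1
        rw [LinearMap.sub_apply, LinearMap.id_apply, sub_eq_zero] at this
        exact this
      have hΦ0 : Φ v = 0 := LinearMap.mem_ker.mp hv2
      have hΦ0' : ∀ s, e v (Sum.elim τf τ s) = 0 := by
        intro s
        have := congrFun hΦ0 s
        simpa [hΦ, LinearMap.funLeft_apply] using this
      apply e.injective
      rw [map_zero]
      funext x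
      obtain ⟨s, rfl⟩ := hbij.2 x
      cases s with
      | inl a =>
        have := hΦ0' (Sum.inl a)
        simpa using this
      | inr q =>
        show e v ((⇑φ)^[q.1.val] (τ q.2)) = 0
        rw [hit_fix v hσ]
        have := hΦ0' (Sum.inr q.2)
        simpa using this
    have hmap : LinearIndependent ℝ (⇑Φ ∘ fam) := hli.map hdisj
    have hcardle := hmap.fintype_card_le_finrank
    rw [Fintype.card_coe] at hcardle
    have hfr : Module.finrank ℝ (Fin N ⊕ Fin r → ℝ) = N + r := by
      rw [Module.finrank_pi]; simp
    rw [hfr] at hcardle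
    exact hcardle
  -- bound for Sm
  have hSmneg : ∀ μ ∈ Sm, ∃ j : Fin n, ev j = μ ∧ σL (b j) = -(b j) := by
    intro μ hμ
    have h1 := (Finset.mem_filter.mp hμ).2
    obtain ⟨j, hj1, hj2, _⟩ := main μ (Finset.mem_filter.mp hμ).1
    rcases hj2 with h | h
    · exact absurd ⟨j, hj1, h⟩ h1
    · exact ⟨j, hj1, h⟩
  have hSmcard : Sm.card ≤ r := by
    set Φ : EuclideanSpace ℝ (Fin n) →ₗ[ℝ] (Fin r → ℝ) :=
      (LinearMap.funLeft ℝ ℝ τ).comp e.toLinearMap with hΦ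
    have hex : ∀ μ : ↥Sm, ∃ j : Fin n, ev j = (μ : ℝ) ∧ σL (b j) = -(b j) :=
      fun μ => hSmneg _ μ.2
    choose J hJ1 hJ2 using hex
    set fam : ↥Sm → EuclideanSpace ℝ (Fin n) := fun μ => b (J μ) with hfam
    have heig : ∀ μ : ↥Sm, Module.End.HasEigenvector T (μ : ℝ) (fam μ) := by
      intro μ
      refine ⟨?_, ?_⟩
      · rw [Module.End.mem_eigenspace_iff]
        show T (b (J μ)) = (μ : ℝ) • b (J μ)
        rw [hTb, hJ1 μ]
      · exact b.orthonormal.ne_zero _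
    have hli : LinearIndependent ℝ fam :=
      Module.End.eigenvectors_linearIndependent' T (fun μ : ↥Sm => (μ : ℝ))
        Subtype.coe_injective _ heig
    have hrange : ∀ w ∈ Set.range fam, σL w = -w := by
      rintro w ⟨μ, rfl⟩
      exact hJ2 μ
    have hdisj : Disjoint (Submodule.span ℝ (Set.range fam)) (LinearMap.ker Φ) := by
      have hVle : Set.range fam ⊆ (LinearMap.ker (σL + LinearMap.id) : Set _) := by
        intro w hw
        simp only [SetLike.mem_coe, LinearMap.mem_ker, LinearMap.add_apply, LinearMap.id_apply]
        rw [hrange w hw]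
        exact neg_add_cancel w
      apply Disjoint.mono_left (Submodule.span_le.mpr hVle)
      rw [Submodule.disjoint_def]
      intro v hv1 hv2
      have hσ : σL v = -v := by
        have := LinearMap.mem_ker.mp hv1
        rw [LinearMap.add_apply, LinearMap.id_apply, add_eq_zero_iff_eq_neg] at this
        exact this
      have hΦ0 : Φ v = 0 := LinearMap.mem_ker.mp hv2
      have hΦ0' : ∀ i, e v (τ i) = 0 := by
        intro i
        have := congrFun hΦ0 i
        simpa [hΦ, LinearMap.funLeft_apply] using this
      have hstep : ∀ y, e v (φ y) = -(e v y) := by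
        intro y
        have h1 := heσ v y
        rw [hσ, map_neg] at h1
        have : (-(e v)) y = -(e v y) := rfl
        rw [this] at h1
        exact h1.symm
      apply e.injective
      rw [map_zero]
      funext x
      obtain ⟨s, rfl⟩ := hbij.2 x
      cases s with
      | inl a =>
        have h1 : e v (τf a) = -(e v (τf a)) := by
          conv_lhs => rw [← hτf a]
          rw [hstep]
        have : e v (τf a) = 0 := by linarith [h1]
        simpa using this
      | inr q =>
        show e v ((⇑φ)^[q.1.val] (τ q.2)) = 0
        rw [hit_neg v hσ, hΦ0' q.2, mul_zero]
    have hmap : LinearIndependent ℝ (⇑Φ ∘ fam) := hli.map hdisj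
    have hcardle := hmap.fintype_card_le_finrank
    rw [Fintype.card_coe] at hcardle
    have hfr : Module.finrank ℝ (Fin r → ℝ) = r := by
      rw [Module.finrank_pi]; simp
    rw [hfr] at hcardle
    exact hcardle
  constructor
  · intro hodd
    have hSm0 : Sm = ∅ := by
      rw [Finset.eq_empty_iff_forall_notMem]
      intro μ hμ
      have h1 := (Finset.mem_filter.mp hμ).2
      obtain ⟨j, hj1, _, hj3⟩ := main μ (Finset.mem_filter.mp hμ).1
      exact h1 ⟨j, hj1, hj3 hodd⟩
    have : S.card = Sp.card := by rw [← hsplit, hSm0]; simp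
    rw [hdiv]
    calc S.card = Sp.card := this
      _ ≤ N + r := hSpcard
  · intro _
    rw [hdiv]
    calc S.card = Sp.card + Sm.card := hsplit.symm
      _ ≤ (N + r) + r := Nat.add_le_add hSpcard hSmcard
      _ = N + 2 * r := by ring
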